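/- Let T be the set of terms over variables x_1,…,x_n in the signature {p, q, r, s} (p, q unary; r, s binary). Define θ : T → {1,…,n} by θ(x_i) = i, θ(q(r(z_1,z_2))) = θ(z_2), and θ(f(z_1,…,z_l)) = θ(z_1) in all other cases. Then θ is invariant under the rewriting rules generated by the identities p r(x,y) ≈ p s(x,y) and q r(x,y) ≈ q s(y,x): if two terms are equal modulo these identities and neither has outermost symbol r, they have the same θ-value; moreover θ(α(t(β_1(x_{i_1}),…,β_n(x_{i_n})))) = i_{θ(t)} whenever t's outermost symbol is not r, where α, β_j are (possibly empty) words in {p,q}. -/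

import Mathlib

/-- Terms over variables `x₁,…,xₙ` in the signature {p, q (unary); r, s (binary)}. -/
inductive Tm (n : ℕ) where
  | var : Fin n → Tm n
  | p : Tm n → Tm n
  | q : Tm n → Tm n
  | r : Tm n → Tm n → Tm n
  | s : Tm n → Tm n → Tm n

/-- θ picks the index of the leftmost variable after rewriting each subterm
`q (r z₁ z₂)` to `q (s z₂ z₁)`. -/
def theta {n : ℕ} : Tm n → Fin n
  | .var i => i
  | .p t => theta t
  | .q (.r _ z2) => theta z2
  | .q t => theta t
  | .r z1 _ => theta z1
  | .s z1 _ => theta z1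

/-- The equational theory generated by p r(x,y) ≈ p s(x,y) and q r(x,y) ≈ q s(y,x). -/
inductive Eqv {n : ℕ} : Tm n → Tm n → Prop
  | pr (t u : Tm n) : Eqv (.p (.r t u)) (.p (.s t u))
  | qr (t u : Tm n) : Eqv (.q (.r t u)) (.q (.s u t))
  | refl (t : Tm n) : Eqv t t
  | symm {t u : Tm n} : Eqv t u → Eqv u t
  | trans {t u v : Tm n} : Eqv t u → Eqv u v → Eqv t v
  | congrP {t u : Tm n} : Eqv t u → Eqv (.p t) (.p u)
  | congrQ {t u : Tm n} : Eqv t u → Eqv (.q t) (.q u)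
  | congrR {t₁ u₁ t₂ u₂ : Tm n} : Eqv t₁ u₁ → Eqv t₂ u₂ → Eqv (.r t₁ t₂) (.r u₁ u₂)
  | congrS {t₁ u₁ t₂ u₂ : Tm n} : Eqv t₁ u₁ → Eqv t₂ u₂ → Eqv (.s t₁ t₂) (.s u₁ u₂)

/-- The outermost symbol of the term is `r`. -/
def isR {n : ℕ} : Tm n → Prop
  | .r _ _ => True
  | _ => False

/-- Substitution of terms for variables. -/
def subst {n m : ℕ} : Tm n → (Fin n → Tm m) → Tm m
  | .var i, σ => σ i
  | .p t, σ => .p (subst t σ)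
  | .q t, σ => .q (subst t σ)
  | .r t u, σ => .r (subst t σ) (subst u σ)
  | .s t u, σ => .s (subst t σ) (subst u σ)

/-- A word over {p, q} applied to a term (`true` ↦ p, `false` ↦ q). -/
def applyWord {m : ℕ} : List Bool → Tm m → Tm m
  | [], t => t
  | (b :: w), t => if b then .p (applyWord w t) else .q (applyWord w t)

/-- second-component variant of θ -/
def theta2 {n : ℕ} : Tm n → Fin n
  | .r _ z2 => theta z2
  | t => theta t

def fixP {n : ℕ} : Tm n → Tm n
  | .r a b => .s a b
  | t => t

def fixQ {n : ℕ} : Tm n → Tm n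
  | .r a b => .s b a
  | t => t

/-- Normal form. -/
def nf {n : ℕ} : Tm n → Tm n
  | .var i => .var i
  | .p t => .p (fixP (nf t))
  | .q t => .q (fixQ (nf t))
  | .r a b => .r (nf a) (nf b)
  | .s a b => .s (nf a) (nf b)

lemma theta_p {n : ℕ} (t : Tm n) : theta (.p t) = theta t := by
  cases t <;> rfl

lemma theta_q {n : ℕ} (t : Tm n) : theta (.q t) = theta2 t := by
  cases t <;> rfl

lemma theta_fixP {n : ℕ} (t : Tm n) : theta (fixP t) = theta t := by
  cases t <;> rfl

lemma theta_fixQ {n : ℕ} (t : Tm n) : theta (fixQ t) = theta2 t := by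
  cases t <;> rfl

lemma theta2_fixP {n : ℕ} (t : Tm n) : theta2 (fixP t) = theta t := by
  cases t <;> rfl

lemma theta2_fixQ {n : ℕ} (t : Tm n) : theta2 (fixQ t) = theta2 t := by
  cases t <;> rfl

lemma theta2_q {n : ℕ} (t : Tm n) : theta2 (.q t) = theta2 t := by
  cases t <;> rfl

lemma theta_nf {n : ℕ} (t : Tm n) :
    theta (nf t) = theta t ∧ theta2 (nf t) = theta2 t := by
  induction t with
  | var i => exact ⟨rfl, rfl⟩
  | p t ih =>
    constructor <;>
      simp [nf, theta_p, theta2, theta_fixP, ih.1]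
  | q t ih =>
    refine ⟨?_, ?_⟩
    · show theta (.q (fixQ (nf t))) = theta (.q t)
      rw [theta_q, theta_q, theta2_fixQ, ih.2]
    · show theta2 (.q (fixQ (nf t))) = theta2 (.q t)
      rw [theta2_q, theta2_q, theta2_fixQ, ih.2]
  | r a b iha ihb =>
    exact ⟨iha.1, by simpa [nf, theta2] using ihb.1⟩
  | s a b iha ihb =>
    exact ⟨iha.1, by simpa [nf, theta2, theta] using iha.1⟩

lemma nf_eqv {n : ℕ} {t u : Tm n} (h : Eqv t u) : nf t = nf u := by
  induction h with
  | pr t u => rfl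
  | qr t u => rfl
  | refl t => rfl
  | symm _ ih => exact ih.symm
  | trans _ _ ih1 ih2 => exact ih1.trans ih2
  | congrP _ ih => simp [nf, ih]
  | congrQ _ ih => simp [nf, ih]
  | congrR _ _ ih1 ih2 => simp [nf, ih1, ih2]
  | congrS _ _ ih1 ih2 => simp [nf, ih1, ih2]

lemma notR_applyWord {m : ℕ} (w : List Bool) (u : Tm m) (hu : ¬ isR u) :
    ¬ isR (applyWord w u) := by
  cases w with
  | nil => exact hu
  | cons b w =>
    cases b <;> simp [applyWord, isR]

lemma theta_applyWord {m : ℕ} (w : List Bool) (u : Tm m) (hu : ¬ isR u) :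
    theta (applyWord w u) = theta u := by
  induction w with
  | nil => rfl
  | cons b w ih =>
    cases b with
    | true => simpa [applyWord, theta_p] using ih
    | false =>
      have hw : ¬ isR (applyWord w u) := notR_applyWord w u hu
      rw [show applyWord (false :: w) u = .q (applyWord w u) from rfl, theta_q]
      have : theta2 (applyWord w u) = theta (applyWord w u) := by
        cases h : applyWord w u <;> simp_all [isR, theta2]
      rw [this, ih]

lemma theta_subst {n m : ℕ} (β : Fin n → List Bool) (idx : Fin n → Fin m) (t : Tm n) :
    theta (subst t (fun j => applyWord (β j) (Tm.var (idx j)))) = idx (theta t) ∧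
    theta2 (subst t (fun j => applyWord (β j) (Tm.var (idx j)))) = idx (theta2 t) := by
  induction t with
  | var i =>
    have h1 : theta (applyWord (β i) (Tm.var (idx i))) = idx i :=
      theta_applyWord _ _ (by simp [isR])
    refine ⟨h1, ?_⟩
    have h2 : ∀ u : Tm m, ¬ isR u → theta2 u = theta u := by
      intro u hu; cases u <;> simp_all [isR, theta2]
    show theta2 (applyWord (β i) (Tm.var (idx i))) = idx (theta2 (Tm.var i))
    rw [h2 _ (notR_applyWord _ _ (by simp [isR])), h1]; rfl
  | p t ih =>
    constructor <;> simp [subst, theta_p, theta2, ih.1]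
  | q t ih =>
    refine ⟨?_, ?_⟩
    · show theta (.q (subst t _)) = idx (theta (.q t))
      rw [theta_q, theta_q, ih.2]
    · show theta2 (.q (subst t _)) = idx (theta2 (.q t))
      rw [theta2_q, theta2_q, ih.2]
  | r a b iha ihb =>
    refine ⟨?_, ?_⟩
    · simpa [subst, theta2, theta] using iha.1
    · simpa [subst, theta2] using ihb.1
  | s a b iha ihb =>
    constructor <;> simpa [subst, theta2, theta] using iha.1

lemma notR_subst {n m : ℕ} (β : Fin n → List Bool) (idx : Fin n → Fin m) (t : Tm n)
    (ht : ¬ isR t) :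
    ¬ isR (subst t (fun j => applyWord (β j) (Tm.var (idx j)))) := by
  cases t with
  | var i => exact notR_applyWord _ _ (by simp [isR])
  | r a b => exact absurd trivial ht
  | _ => simp [subst, isR]

/-- θ is invariant under the equational theory (on terms whose outermost symbol is not r),
and computes correctly on terms obtained by substituting unary words applied to
variables and applying an outer unary word. -/
theorem stmt_12 {n m : ℕ} :
    (∀ t u : Tm n, Eqv t u → ¬ isR t → ¬ isR u → theta t = theta u) ∧
    (∀ (t : Tm n) (α : List Bool) (β : Fin n → List Bool) (idx : Fin n → Fin m),
      ¬ isR t →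
      theta (applyWord α (subst t (fun j => applyWord (β j) (Tm.var (idx j))))) =
        idx (theta t)) := by
  constructor
  · intro t u h _ _
    have := congrArg theta (nf_eqv h)
    rwa [(theta_nf t).1, (theta_nf u).1] at this
  · intro t α β idx ht
    rw [theta_applyWord _ _ (notR_subst β idx t ht)]
    exact (theta_subst β idx t).1
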